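/- arXiv:1512.01110 — 2 statements merged into one kernel-verified Lean document; each statement's English description precedes it below -/
import Mathlib

section
/- Let m, n be positive integers, r = min(m,n), Ω ⊆ {1,…,m}×{1,…,n} an index set, X a real m×n matrix, σ > 0 and λ > 0. Then the infimum over all real m×n matrices Z of (1/(2σ²))·Σ_{(i,j)∈Ω}(X_{ij} − Z_{ij})² + λ‖Z‖_* equals the infimum, over all tuples (d, α, β) with d ∈ ℝ^r, d_k ≥ 0, α_k ∈ ℝ^m, ‖α_k‖₂ ≤ 1, β_k ∈ ℝ^n, ‖β_k‖₂ ≤ 1 for all k ∈ {1,…,r}, of (1/(2σ²))·Σ_{(i,j)∈Ω}(X_{ij} − (Σ_{k=1}^r d_k α_k β_kᵀ)_{ij})² + λ·Σ_{k=1}^r d_k. (Theorem 1, equality of optimal values s = t of problems P1 and P2.) -/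
open scoped BigOperators

/-- The nuclear norm of a real matrix: the sum of the square roots of the
eigenvalues of `Zᵀ * Z` (i.e. the sum of the singular values of `Z`). -/
noncomputable def nuclearNorm {m n : ℕ} (Z : Matrix (Fin m) (Fin n) ℝ) : ℝ :=
  ∑ j, Real.sqrt ((show (Matrix.transpose Z * Z).IsHermitian by
    simpa using Matrix.isHermitian_conjTranspose_mul_self Z).eigenvalues j)

/-- The Euclidean (ℓ²) norm of a vector in `ℝ^m`. -/
noncomputable def l2norm {m : ℕ} (x : Fin m → ℝ) : ℝ := Real.sqrt (∑ i, x i ^ 2)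

/-- `∑ k, d k • (α k) (β k)ᵀ`, a sum of scaled rank-one matrices. -/
noncomputable def rankOneSum {m n r : ℕ} (d : Fin r → ℝ) (α : Fin r → Fin m → ℝ)
    (β : Fin r → Fin n → ℝ) : Matrix (Fin m) (Fin n) ℝ :=
  ∑ k, d k • Matrix.vecMulVec (α k) (β k)

open Matrix

lemma fsum_dotProduct {N M : ℕ} (x : Fin M → ℝ) (f : Fin N → Fin M → ℝ) :
    (∑ j, f j) ⬝ᵥ x = ∑ j, f j ⬝ᵥ x := by
  simp only [dotProduct, Finset.sum_apply, Finset.sum_mul]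
  exact Finset.sum_comm


lemma dotProduct_fsum {N M : ℕ} (x : Fin M → ℝ) (f : Fin N → Fin M → ℝ) :
    x ⬝ᵥ (∑ j, f j) = ∑ j, x ⬝ᵥ f j := by
  simp only [dotProduct, Finset.sum_apply, Finset.mul_sum]
  exact Finset.sum_comm

lemma vecMulVec_mulVec' {m n : ℕ} (a : Fin m → ℝ) (b x : Fin n → ℝ) :
    vecMulVec a b *ᵥ x = (b ⬝ᵥ x) • a := by
  funext i
  simp only [mulVec, vecMulVec_apply, dotProduct, Pi.smul_apply, smul_eq_mul,
    Finset.sum_mul, Finset.mul_sum]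
  exact Finset.sum_congr rfl fun j _ => by ring

lemma sum_mulVec' {ι m n : ℕ} (M : Fin ι → Matrix (Fin m) (Fin n) ℝ) (x : Fin n → ℝ) :
    (∑ k, M k) *ᵥ x = ∑ k, (M k *ᵥ x) := by
  funext i
  simp only [mulVec, dotProduct, Matrix.sum_apply, Finset.sum_apply, Finset.sum_mul]
  exact Finset.sum_comm

lemma l2norm_eq_sqrt_dot {M : ℕ} (x : Fin M → ℝ) : l2norm x = Real.sqrt (x ⬝ᵥ x) := by
  rw [l2norm, dotProduct]
  congr 1
  exact Finset.sum_congr rfl fun i _ => sq (x i)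

lemma bessel' {N M : ℕ} (u : Fin N → Fin M → ℝ)
    (horth : ∀ i j, i ≠ j → u i ⬝ᵥ u j = 0)
    (hnorm : ∀ j, u j ⬝ᵥ u j = 0 ∨ u j ⬝ᵥ u j = 1)
    (x : Fin M → ℝ) :
    ∑ j, (u j ⬝ᵥ x) ^ 2 ≤ x ⬝ᵥ x := by
  set c : Fin N → ℝ := fun j => u j ⬝ᵥ x with hc
  set P : Fin M → ℝ := ∑ j, c j • u j with hP
  have selfnn : ∀ y : Fin M → ℝ, 0 ≤ y ⬝ᵥ y := fun y =>
    Finset.sum_nonneg fun i _ => mul_self_nonneg _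
  have hxP : x ⬝ᵥ P = ∑ j, c j ^ 2 := by
    rw [hP, dotProduct_fsum]
    refine Finset.sum_congr rfl fun j _ => ?_
    rw [dotProduct_smul, smul_eq_mul, dotProduct_comm, sq]
  have hPx : P ⬝ᵥ x = ∑ j, c j ^ 2 := by rw [dotProduct_comm]; exact hxP
  have hPP : P ⬝ᵥ P = ∑ j, c j ^ 2 * (u j ⬝ᵥ u j) := by
    rw [hP, fsum_dotProduct]
    refine Finset.sum_congr rfl fun i _ => ?_
    rw [smul_dotProduct, dotProduct_fsum, smul_eq_mul]
    rw [Finset.sum_eq_single i (fun j _ hj => by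
      rw [dotProduct_smul, smul_eq_mul, horth i j (Ne.symm hj), mul_zero]) (by simp)]
    rw [dotProduct_smul, smul_eq_mul]; ring
  have key : ∀ j, c j ^ 2 * (u j ⬝ᵥ u j) = c j ^ 2 := by
    intro j
    rcases hnorm j with h | h
    · have hu : u j = 0 := dotProduct_self_eq_zero.mp h
      simp [hc, hu]
    · rw [h, mul_one]
  have h0 := selfnn (x - P)
  have hexp : (x - P) ⬝ᵥ (x - P) = x ⬝ᵥ x - ∑ j, c j ^ 2 := by
    rw [sub_dotProduct, dotProduct_sub, dotProduct_sub, hxP, hPx, hPP]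
    rw [Finset.sum_congr rfl fun j _ => key j]
    ring
  rw [hexp] at h0
  linarith

lemma svd_exists {m n : ℕ} (Z : Matrix (Fin m) (Fin n) ℝ) :
    ∃ (s : Fin n → ℝ) (u : Fin n → Fin m → ℝ) (v : Fin n → Fin n → ℝ),
      (∀ j, 0 ≤ s j) ∧
      (∀ i j, i ≠ j → u i ⬝ᵥ u j = 0) ∧ (∀ j, u j ⬝ᵥ u j = 0 ∨ u j ⬝ᵥ u j = 1) ∧
      (∀ i j, v i ⬝ᵥ v j = if i = j then 1 else 0) ∧
      Z = ∑ j, s j • vecMulVec (u j) (v j) ∧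
      (∀ j, u j ⬝ᵥ (Z *ᵥ v j) = s j) ∧
      nuclearNorm Z = ∑ j, s j ∧
      Fintype.card {j // s j ≠ 0} ≤ min m n := by
  classical
  have hH : (Zᵀ * Z).IsHermitian := by simpa using Matrix.isHermitian_conjTranspose_mul_self Z
  set μ : Fin n → ℝ := hH.eigenvalues with hμdef
  have hμ0 : ∀ j, 0 ≤ μ j := fun j => Matrix.eigenvalues_conjTranspose_mul_self_nonneg Z j
  set v : Fin n → Fin n → ℝ := fun j => hH.eigenvectorBasis j with hvdef
  have hZH : Zᴴ = Zᵀ := by ext i j; simp [conjTranspose_apply]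
  have hEig : ∀ j, (Zᵀ * Z) *ᵥ v j = μ j • v j := by
    intro j
    rw [← hZH]
    exact hH.mulVec_eigenvectorBasis j
  have hvv : ∀ i j, v i ⬝ᵥ v j = if i = j then 1 else 0 := by
    intro i j
    have := orthonormal_iff_ite.mp hH.eigenvectorBasis.orthonormal i j
    simpa [PiLp.inner_apply, dotProduct, hvdef, mul_comm] using this
  have hww : ∀ i j, (Z *ᵥ v i) ⬝ᵥ (Z *ᵥ v j) = if i = j then μ j else 0 := by
    intro i j
    have h1 : v i ⬝ᵥ ((Zᵀ * Z) *ᵥ v j) = (Z *ᵥ v i) ⬝ᵥ (Z *ᵥ v j) := by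
      rw [← Matrix.mulVec_mulVec, Matrix.dotProduct_mulVec, Matrix.vecMul_transpose]
    rw [← h1, hEig j, dotProduct_smul, smul_eq_mul, hvv i j]
    split <;> simp [mul_comm]
  set s : Fin n → ℝ := fun j => Real.sqrt (μ j) with hsdef
  have hs0 : ∀ j, 0 ≤ s j := fun j => Real.sqrt_nonneg _
  have hs_sq : ∀ j, s j * s j = μ j := fun j => Real.mul_self_sqrt (hμ0 j)
  have hszero : ∀ j, s j = 0 ↔ μ j = 0 := fun j => Real.sqrt_eq_zero (hμ0 j)
  set u : Fin n → Fin m → ℝ := fun j => if μ j = 0 then 0 else (s j)⁻¹ • (Z *ᵥ v j) with hudef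
  have hwzero : ∀ j, μ j = 0 → Z *ᵥ v j = 0 := by
    intro j h
    have := hww j j
    rw [if_pos rfl, h] at this
    exact dotProduct_self_eq_zero.mp this
  have hsu : ∀ j, s j • u j = Z *ᵥ v j := by
    intro j
    by_cases h : μ j = 0
    · simp [hudef, h, hwzero j h]
    · have hsne : s j ≠ 0 := fun hh => h ((hszero j).mp hh)
      simp [hudef, h, smul_smul, mul_inv_cancel₀ hsne]
  set V : Matrix (Fin n) (Fin n) ℝ := Matrix.of fun i j => v j i with hVdef
  have hVtV : Vᵀ * V = 1 := by
    ext i j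
    simp only [Matrix.mul_apply, transpose_apply, hVdef, Matrix.of_apply, Matrix.one_apply]
    simpa [dotProduct] using hvv i j
  have hVVt : V * Vᵀ = 1 := mul_eq_one_comm.mp hVtV
  have hcomp : ∀ k i', (∑ j, v j k * v j i') = if k = i' then 1 else 0 := by
    intro k i'
    have := congrFun (congrFun hVVt k) i'
    simpa [Matrix.mul_apply, Matrix.one_apply, hVdef] using this
  have hdecomp : Z = ∑ j, s j • vecMulVec (u j) (v j) := by
    have hterm : ∀ j, s j • vecMulVec (u j) (v j) = vecMulVec (Z *ᵥ v j) (v j) := by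
      intro j
      rw [← hsu j]
      ext i i'
      simp only [vecMulVec_apply, Matrix.smul_apply, smul_eq_mul, Pi.smul_apply]
      ring
    rw [Finset.sum_congr rfl fun j _ => hterm j]
    ext i i'
    rw [Matrix.sum_apply]
    have hk : ∀ k, (∑ j, Z i k * (v j k * v j i')) = Z i k * (if k = i' then 1 else 0) :=
      fun k => by rw [← Finset.mul_sum, hcomp k i']
    calc Z i i' = ∑ k, Z i k * (if k = i' then 1 else 0) := by
          simp [Finset.sum_ite_eq, Finset.sum_ite_eq']
      _ = ∑ k, ∑ j, Z i k * (v j k * v j i') := Finset.sum_congr rfl fun k _ => (hk k).symm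
      _ = ∑ j, ∑ k, Z i k * (v j k * v j i') := Finset.sum_comm
      _ = ∑ j, vecMulVec (Z *ᵥ v j) (v j) i i' := by
          refine Finset.sum_congr rfl fun j _ => ?_
          simp only [vecMulVec_apply, mulVec, dotProduct, Finset.sum_mul]
          exact Finset.sum_congr rfl fun k _ => by ring
  have huu : ∀ i j, u i ⬝ᵥ u j = if i = j then (if μ j = 0 then 0 else 1) else 0 := by
    intro i j
    by_cases hi : μ i = 0
    · have hzi : u i = 0 := by simp [hudef, hi]
      rw [hzi, zero_dotProduct]
      by_cases hij : i = j
      · subst hij; simp [hi]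
      · simp [hij]
    · by_cases hj : μ j = 0
      · have hzj : u j = 0 := by simp [hudef, hj]
        rw [hzj, dotProduct_zero]
        simp [hj]
      · have h2 : u i ⬝ᵥ u j = (s i)⁻¹ * (s j)⁻¹ * ((Z *ᵥ v i) ⬝ᵥ (Z *ᵥ v j)) := by
          simp only [hudef, if_neg hi, if_neg hj, smul_dotProduct, dotProduct_smul, smul_eq_mul]
          ring
        rw [h2, hww i j]
        by_cases hij : i = j
        · subst hij
          have hsne : s i ≠ 0 := fun hh => hi ((hszero i).mp hh)
          rw [if_pos rfl, if_pos rfl, if_neg hi, ← hs_sq i]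
          field_simp
        · simp [hij]
  have hkey : ∀ j, u j ⬝ᵥ (Z *ᵥ v j) = s j := by
    intro j
    by_cases h : μ j = 0
    · have : u j = 0 := by simp [hudef, h]
      rw [this, zero_dotProduct, (hszero j).mpr h]
    · have hsne : s j ≠ 0 := fun hh => h ((hszero j).mp hh)
      have h2 : u j ⬝ᵥ (Z *ᵥ v j) = (s j)⁻¹ * ((Z *ᵥ v j) ⬝ᵥ (Z *ᵥ v j)) := by
        simp [hudef, h, smul_dotProduct, smul_eq_mul]
      rw [h2, hww j j, if_pos rfl, ← hs_sq j]
      field_simp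
  have hcard : Fintype.card {j // s j ≠ 0} ≤ min m n := by
    have he : Fintype.card {j // s j ≠ 0} = Fintype.card {j // μ j ≠ 0} :=
      Fintype.card_congr (Equiv.subtypeEquivRight fun j => by rw [not_iff_not]; exact hszero j)
    rw [he, ← hH.rank_eq_card_non_zero_eigs]
    have h1 : (Zᴴ * Z).rank = Z.rank := by rw [hZH]; exact Matrix.rank_transpose_mul_self Z
    rw [← hZH, h1]
    exact le_min (by simpa using Matrix.rank_le_card_height Z)
      (by simpa using Matrix.rank_le_card_width Z)
  refine ⟨s, u, v, hs0, ?_, ?_, hvv, hdecomp, hkey, ?_, hcard⟩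
  · intro i j hij; rw [huu i j, if_neg hij]
  · intro j
    rw [huu j j, if_pos rfl]
    by_cases h : μ j = 0 <;> simp [h]
  · rfl

-- Direction A
lemma nuclear_le_sum {m n r : ℕ} (d : Fin r → ℝ) (α : Fin r → Fin m → ℝ)
    (β : Fin r → Fin n → ℝ) (hd : ∀ k, 0 ≤ d k)
    (hα : ∀ k, l2norm (α k) ≤ 1) (hβ : ∀ k, l2norm (β k) ≤ 1) :
    nuclearNorm (rankOneSum d α β) ≤ ∑ k, d k := by
  set Z := rankOneSum d α β with hZ
  obtain ⟨s, u, v, hs0, huo, hun, hvv, hdec, hkey, hNN, -⟩ := svd_exists Z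
  have hvo : ∀ i j, i ≠ j → v i ⬝ᵥ v j = 0 := fun i j hij => by rw [hvv i j, if_neg hij]
  have hvn : ∀ j, v j ⬝ᵥ v j = 0 ∨ v j ⬝ᵥ v j = 1 := fun j => Or.inr (by rw [hvv j j, if_pos rfl])
  rw [hNN]
  have hstep : ∀ j, s j = ∑ k, d k * ((u j ⬝ᵥ α k) * (v j ⬝ᵥ β k)) := by
    intro j
    rw [← hkey j, hZ, rankOneSum, sum_mulVec', dotProduct_fsum]
    refine Finset.sum_congr rfl fun k _ => ?_
    rw [Matrix.smul_mulVec, vecMulVec_mulVec', dotProduct_smul, dotProduct_smul,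
      smul_eq_mul, smul_eq_mul, dotProduct_comm (β k) (v j)]
    ring
  rw [Finset.sum_congr rfl fun j _ => hstep j, Finset.sum_comm]
  refine Finset.sum_le_sum fun k _ => ?_
  rw [← Finset.mul_sum]
  have hT : (∑ j, (u j ⬝ᵥ α k) * (v j ⬝ᵥ β k)) ≤ 1 := by
    set T := ∑ j, (u j ⬝ᵥ α k) * (v j ⬝ᵥ β k) with hT
    have hcs : T ^ 2 ≤ (∑ j, (u j ⬝ᵥ α k) ^ 2) * ∑ j, (v j ⬝ᵥ β k) ^ 2 :=
      Finset.sum_mul_sq_le_sq_mul_sq _ _ _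
    have hbu : (∑ j, (u j ⬝ᵥ α k) ^ 2) ≤ α k ⬝ᵥ α k := bessel' u huo hun (α k)
    have hbv : (∑ j, (v j ⬝ᵥ β k) ^ 2) ≤ β k ⬝ᵥ β k := bessel' v hvo hvn (β k)
    have hα1 : α k ⬝ᵥ α k ≤ 1 := by
      have := hα k
      rw [l2norm_eq_sqrt_dot] at this
      have h0 : 0 ≤ α k ⬝ᵥ α k := Finset.sum_nonneg fun i _ => mul_self_nonneg _
      nlinarith [Real.sq_sqrt h0, Real.sqrt_nonneg (α k ⬝ᵥ α k)]
    have hβ1 : β k ⬝ᵥ β k ≤ 1 := by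
      have := hβ k
      rw [l2norm_eq_sqrt_dot] at this
      have h0 : 0 ≤ β k ⬝ᵥ β k := Finset.sum_nonneg fun i _ => mul_self_nonneg _
      nlinarith [Real.sq_sqrt h0, Real.sqrt_nonneg (β k ⬝ᵥ β k)]
    have hsq : T ^ 2 ≤ 1 := by
      refine hcs.trans ?_
      have h1 : (0:ℝ) ≤ ∑ j, (u j ⬝ᵥ α k) ^ 2 := Finset.sum_nonneg fun j _ => sq_nonneg _
      have h2 : (0:ℝ) ≤ ∑ j, (v j ⬝ᵥ β k) ^ 2 := Finset.sum_nonneg fun j _ => sq_nonneg _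
      nlinarith
    nlinarith
  calc d k * ∑ j, (u j ⬝ᵥ α k) * (v j ⬝ᵥ β k) ≤ d k * 1 :=
        mul_le_mul_of_nonneg_left hT (hd k)
    _ = d k := mul_one _

-- Direction B
lemma exists_decomp {m n r : ℕ} (hr : r = min m n) (Z : Matrix (Fin m) (Fin n) ℝ) :
    ∃ (d : Fin r → ℝ) (α : Fin r → Fin m → ℝ) (β : Fin r → Fin n → ℝ),
      (∀ k, 0 ≤ d k) ∧ (∀ k, l2norm (α k) ≤ 1) ∧ (∀ k, l2norm (β k) ≤ 1) ∧
      rankOneSum d α β = Z ∧ (∑ k, d k) = nuclearNorm Z := by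
  classical
  obtain ⟨s, u, v, hs0, huo, hun, hvv, hdec, hkey, hNN, hcard⟩ := svd_exists Z
  have hcard' : Fintype.card {j // s j ≠ 0} ≤ Fintype.card (Fin r) := by
    rw [Fintype.card_fin, hr]; exact hcard
  obtain ⟨e⟩ := Function.Embedding.nonempty_of_card_le hcard'
  set d : Fin r → ℝ := Function.extend e (fun j => s j.1) 0 with hd
  set α : Fin r → Fin m → ℝ := Function.extend e (fun j => u j.1) 0 with hαd
  set β : Fin r → Fin n → ℝ := Function.extend e (fun j => v j.1) 0 with hβd
  have hde : ∀ j : {j // s j ≠ 0}, d (e j) = s j.1 := fun j => e.injective.extend_apply _ _ j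
  have hαe : ∀ j : {j // s j ≠ 0}, α (e j) = u j.1 := fun j => e.injective.extend_apply _ _ j
  have hβe : ∀ j : {j // s j ≠ 0}, β (e j) = v j.1 := fun j => e.injective.extend_apply _ _ j
  have hd0 : ∀ k, (¬∃ j, e j = k) → d k = 0 := fun k hk => Function.extend_apply' _ _ _ hk
  have hα0 : ∀ k, (¬∃ j, e j = k) → α k = 0 := fun k hk => Function.extend_apply' _ _ _ hk
  have hβ0 : ∀ k, (¬∃ j, e j = k) → β k = 0 := fun k hk => Function.extend_apply' _ _ _ hk
  -- generic reindexing
  have reidx : ∀ {γ : Type} [inst : AddCommMonoid γ] (F : Fin r → γ) (G : Fin n → γ),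
      (∀ j : {j // s j ≠ 0}, F (e j) = G j.1) → (∀ k, (¬∃ j, e j = k) → F k = 0) →
      (∀ j, s j = 0 → G j = 0) → ∑ k, F k = ∑ j, G j := by
    intro γ inst F G h1 h2 h3
    have step1 : ∑ k, F k = ∑ k ∈ Finset.univ.image e, F k := by
      refine (Finset.sum_subset (Finset.subset_univ _) ?_).symm
      intro k _ hk
      refine h2 k ?_
      rintro ⟨j, rfl⟩
      exact hk (Finset.mem_image.mpr ⟨j, Finset.mem_univ _, rfl⟩)
    have step2 : ∑ k ∈ Finset.univ.image e, F k = ∑ j : {j // s j ≠ 0}, F (e j) :=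
      Finset.sum_image fun a _ b _ hab => e.injective hab
    have step3 : ∑ j : {j // s j ≠ 0}, G j.1 = ∑ j, G j := by
      rw [← Finset.subtype_univ, Finset.sum_subtype_eq_sum_filter]
      exact Finset.sum_filter_of_ne fun j _ hGj => fun hsj => hGj (h3 j hsj)
    rw [step1, step2, Finset.sum_congr rfl fun j _ => h1 j, step3]
  refine ⟨d, α, β, ?_, ?_, ?_, ?_, ?_⟩
  · intro k
    by_cases hk : ∃ j, e j = k
    · obtain ⟨j, rfl⟩ := hk; rw [hde j]; exact hs0 j.1
    · rw [hd0 k hk]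
  · intro k
    by_cases hk : ∃ j, e j = k
    · obtain ⟨j, rfl⟩ := hk
      rw [hαe j, l2norm_eq_sqrt_dot]
      rcases hun j.1 with h | h <;> rw [h] <;> simp
    · rw [hα0 k hk, l2norm_eq_sqrt_dot]; simp
  · intro k
    by_cases hk : ∃ j, e j = k
    · obtain ⟨j, rfl⟩ := hk
      rw [hβe j, l2norm_eq_sqrt_dot, hvv j.1 j.1, if_pos rfl]; simp
    · rw [hβ0 k hk, l2norm_eq_sqrt_dot]; simp
  · rw [rankOneSum]
    rw [reidx (fun k => d k • vecMulVec (α k) (β k)) (fun j => s j • vecMulVec (u j) (v j))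
      (fun j => by rw [hde j, hαe j, hβe j])
      (fun k hk => by rw [hd0 k hk, zero_smul])
      (fun j hj => by rw [hj, zero_smul])]
    exact hdec.symm
  · rw [hNN]
    exact reidx d s (fun j => hde j) (fun k hk => hd0 k hk) (fun j hj => hj)

lemma nuclearNorm_nonneg {m n : ℕ} (Z : Matrix (Fin m) (Fin n) ℝ) : 0 ≤ nuclearNorm Z := by
  unfold nuclearNorm; exact Finset.sum_nonneg fun j _ => Real.sqrt_nonneg _

theorem relaxed_spectral_regularization_equal_optimal_values
    (m n : ℕ) (hm : 0 < m) (hn : 0 < n) (r : ℕ) (hr : r = min m n)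
    (Ω : Finset (Fin m × Fin n)) (X : Matrix (Fin m) (Fin n) ℝ)
    (σ lam : ℝ) (hσ : 0 < σ) (hlam : 0 < lam) :
    sInf {v : ℝ | ∃ Z : Matrix (Fin m) (Fin n) ℝ,
        v = (1 / (2 * σ ^ 2)) * ∑ p ∈ Ω, (X p.1 p.2 - Z p.1 p.2) ^ 2
            + lam * nuclearNorm Z}
    = sInf {v : ℝ | ∃ (d : Fin r → ℝ) (α : Fin r → Fin m → ℝ) (β : Fin r → Fin n → ℝ),
        (∀ k, 0 ≤ d k) ∧ (∀ k, l2norm (α k) ≤ 1) ∧ (∀ k, l2norm (β k) ≤ 1) ∧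
        v = (1 / (2 * σ ^ 2)) * ∑ p ∈ Ω, (X p.1 p.2 - rankOneSum d α β p.1 p.2) ^ 2
            + lam * ∑ k, d k} := by
  set S1 : Set ℝ := {v : ℝ | ∃ Z : Matrix (Fin m) (Fin n) ℝ,
      v = (1 / (2 * σ ^ 2)) * ∑ p ∈ Ω, (X p.1 p.2 - Z p.1 p.2) ^ 2
          + lam * nuclearNorm Z} with hS1
  set S2 : Set ℝ := {v : ℝ | ∃ (d : Fin r → ℝ) (α : Fin r → Fin m → ℝ) (β : Fin r → Fin n → ℝ),
      (∀ k, 0 ≤ d k) ∧ (∀ k, l2norm (α k) ≤ 1) ∧ (∀ k, l2norm (β k) ≤ 1) ∧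
      v = (1 / (2 * σ ^ 2)) * ∑ p ∈ Ω, (X p.1 p.2 - rankOneSum d α β p.1 p.2) ^ 2
          + lam * ∑ k, d k} with hS2
  have hσ2 : 0 < 1 / (2 * σ ^ 2) := by positivity
  have hsq : ∀ (W : Matrix (Fin m) (Fin n) ℝ),
      (0:ℝ) ≤ ∑ p ∈ Ω, (X p.1 p.2 - W p.1 p.2) ^ 2 :=
    fun W => Finset.sum_nonneg fun p _ => sq_nonneg _
  have h1ne : S1.Nonempty := ⟨_, ⟨0, rfl⟩⟩
  have h2ne : S2.Nonempty := by
    refine ⟨_, ⟨0, 0, 0, fun k => le_refl 0, ?_, ?_, rfl⟩⟩ <;>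
      · intro k
        simp [l2norm]
  have hbdd1 : BddBelow S1 := by
    refine ⟨0, fun w hw => ?_⟩
    obtain ⟨Z, rfl⟩ := hw
    have := nuclearNorm_nonneg Z
    have := hsq Z
    positivity
  have hbdd2 : BddBelow S2 := by
    refine ⟨0, fun w hw => ?_⟩
    obtain ⟨d, α, β, hd, hα, hβ, rfl⟩ := hw
    have h1 : (0:ℝ) ≤ ∑ k, d k := Finset.sum_nonneg fun k _ => hd k
    have := hsq (rankOneSum d α β)
    positivity
  apply le_antisymm
  · refine le_csInf h2ne ?_
    rintro w ⟨d, α, β, hd, hα, hβ, rfl⟩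
    have hmem : (1 / (2 * σ ^ 2)) * ∑ p ∈ Ω, (X p.1 p.2 - rankOneSum d α β p.1 p.2) ^ 2
        + lam * nuclearNorm (rankOneSum d α β) ∈ S1 := ⟨rankOneSum d α β, rfl⟩
    refine (csInf_le hbdd1 hmem).trans ?_
    have h1 := nuclear_le_sum d α β hd hα hβ
    have h2 : lam * nuclearNorm (rankOneSum d α β) ≤ lam * ∑ k, d k :=
      mul_le_mul_of_nonneg_left h1 hlam.le
    linarith
  · refine le_csInf h1ne ?_
    rintro w ⟨Z, rfl⟩
    obtain ⟨d, α, β, hd, hα, hβ, hZeq, hsum⟩ := exists_decomp hr Z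
    refine csInf_le hbdd2 ⟨d, α, β, hd, hα, hβ, ?_⟩
    rw [hZeq, hsum]
end

section
/- Let m, n be positive integers, r = min(m,n), Ω ⊆ {1,…,m}×{1,…,n}, X a real m×n matrix, σ > 0 and λ > 0. Suppose (d*, α*, β*) with d*_k ≥ 0, ‖α*_k‖₂ ≤ 1, ‖β*_k‖₂ ≤ 1 for all k ∈ {1,…,r} minimizes G(d,α,β) := (1/(2σ²))·Σ_{(i,j)∈Ω}(X_{ij} − (Σ_{k=1}^r d_k α_k β_kᵀ)_{ij})² + λ·Σ_{k=1}^r d_k over all such feasible tuples. Then the matrix Z* := Σ_{k=1}^r d*_k α*_k (β*_k)ᵀ minimizes F(Z) := (1/(2σ²))·Σ_{(i,j)∈Ω}(X_{ij} − Z_{ij})² + λ‖Z‖_* over all real m×n matrices Z. (Theorem 1, transfer of optimal solutions from P2 to P1.) -/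
open scoped BigOperators

namespace P2P1aux

open Matrix Finset

variable {m n : ℕ}

lemma l2norm_eq_sqrt_dot (x : Fin m → ℝ) : l2norm x = Real.sqrt (x ⬝ᵥ x) := by
  simp [l2norm, dotProduct, sq]

lemma dot_le_one_of_l2norm_le_one {x : Fin m → ℝ} (h : l2norm x ≤ 1) : x ⬝ᵥ x ≤ 1 := by
  have h0 : 0 ≤ x ⬝ᵥ x := Finset.sum_nonneg fun i _ => mul_self_nonneg _
  rw [l2norm_eq_sqrt_dot] at h
  nlinarith [Real.sq_sqrt h0, Real.sqrt_nonneg (x ⬝ᵥ x)]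

lemma l2norm_le_one_of_dot {x : Fin m → ℝ} (h : x ⬝ᵥ x ≤ 1) : l2norm x ≤ 1 := by
  rw [l2norm_eq_sqrt_dot]
  exact Real.sqrt_le_one.mpr h

lemma vecMulVec_mulVec (a : Fin m → ℝ) (b x : Fin n → ℝ) :
    Matrix.vecMulVec a b *ᵥ x = (b ⬝ᵥ x) • a := by
  ext i
  simp [Matrix.mulVec, Matrix.vecMulVec_apply, dotProduct, Finset.sum_mul,
    Finset.mul_sum, mul_comm, mul_assoc, mul_left_comm]

lemma sum_dotProduct' {N : ℕ} (f : Fin N → Fin m → ℝ) (x : Fin m → ℝ) :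
    (∑ j, f j) ⬝ᵥ x = ∑ j, f j ⬝ᵥ x := by
  simp [dotProduct, Finset.sum_mul, Finset.sum_apply]
  rw [Finset.sum_comm]

lemma dotProduct_sum' {N : ℕ} (x : Fin m → ℝ) (f : Fin N → Fin m → ℝ) :
    x ⬝ᵥ (∑ j, f j) = ∑ j, x ⬝ᵥ f j := by
  simp [dotProduct, Finset.mul_sum, Finset.sum_apply]
  rw [Finset.sum_comm]

lemma sum_mulVec' {N : ℕ} (f : Fin N → Matrix (Fin m) (Fin n) ℝ) (x : Fin n → ℝ) :
    (∑ j, f j) *ᵥ x = ∑ j, f j *ᵥ x := by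
  ext i
  simp only [Matrix.mulVec, Finset.sum_apply]
  rw [← sum_dotProduct']
  congr 1
  ext l
  simp [Matrix.sum_apply]

lemma bessel {N : ℕ} (u : Fin N → Fin m → ℝ)
    (horth : ∀ i j, i ≠ j → u i ⬝ᵥ u j = 0) (hnorm : ∀ j, u j ⬝ᵥ u j ≤ 1)
    (x : Fin m → ℝ) : ∑ j, (u j ⬝ᵥ x) ^ 2 ≤ x ⬝ᵥ x := by
  set c : Fin N → ℝ := fun j => u j ⬝ᵥ x with hc
  set y : Fin m → ℝ := x - ∑ j, c j • u j with hy
  have hkey : 0 ≤ y ⬝ᵥ y := Finset.sum_nonneg fun i _ => mul_self_nonneg _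
  have hxS : x ⬝ᵥ (∑ j, c j • u j) = ∑ j, c j ^ 2 := by
    rw [dotProduct_sum']
    refine Finset.sum_congr rfl fun j _ => ?_
    rw [dotProduct_smul, dotProduct_comm]
    simp [hc, sq, smul_eq_mul]
  have hSx : (∑ j, c j • u j) ⬝ᵥ x = ∑ j, c j ^ 2 := by
    rw [dotProduct_comm]; exact hxS
  have hSS : (∑ j, c j • u j) ⬝ᵥ (∑ j, c j • u j) = ∑ j, c j ^ 2 * (u j ⬝ᵥ u j) := by
    rw [sum_dotProduct']
    refine Finset.sum_congr rfl fun i _ => ?_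
    rw [smul_dotProduct, dotProduct_sum']
    have : ∑ j, u i ⬝ᵥ (c j • u j) = c i * (u i ⬝ᵥ u i) := by
      rw [Finset.sum_eq_single i]
      · rw [dotProduct_smul]; simp
      · intro j _ hj
        rw [dotProduct_smul, horth i j (Ne.symm hj)]; simp
      · simp
    rw [this]; ring_nf
  have hexp : y ⬝ᵥ y = x ⬝ᵥ x - 2 * ∑ j, c j ^ 2 + ∑ j, c j ^ 2 * (u j ⬝ᵥ u j) := by
    rw [hy, sub_dotProduct, dotProduct_sub, dotProduct_sub,
      hxS, hSx, hSS]
    ring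
  have hb : ∑ j, c j ^ 2 * (u j ⬝ᵥ u j) ≤ ∑ j, c j ^ 2 := by
    refine Finset.sum_le_sum fun j _ => ?_
    have := hnorm j
    nlinarith [sq_nonneg (c j)]
  rw [hexp] at hkey
  have : ∑ j, (u j ⬝ᵥ x) ^ 2 = ∑ j, c j ^ 2 := rfl
  linarith

lemma exists_svd (Z : Matrix (Fin m) (Fin n) ℝ) :
    ∃ (s : Fin n → ℝ) (u : Fin n → Fin m → ℝ) (v : Fin n → Fin n → ℝ),
      (∀ j, 0 ≤ s j) ∧ (∑ j, s j = nuclearNorm Z) ∧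
      (∀ j, Z *ᵥ v j = s j • u j) ∧
      (∀ i j, i ≠ j → u i ⬝ᵥ u j = 0) ∧ (∀ j, u j ⬝ᵥ u j ≤ 1) ∧
      (∀ j, s j ≠ 0 → u j ⬝ᵥ u j = 1) ∧
      (∀ i j, v i ⬝ᵥ v j = if i = j then 1 else 0) ∧
      (Z = ∑ j, s j • Matrix.vecMulVec (u j) (v j)) ∧
      ((Finset.univ.filter (fun j => s j ≠ 0)).card ≤ min m n) := by
  classical
  have hH : (Zᵀ * Z).IsHermitian := by
    simpa using Matrix.isHermitian_conjTranspose_mul_self Z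
  set lam : Fin n → ℝ := hH.eigenvalues with hlamdef
  set b := hH.eigenvectorBasis with hbdef
  set v : Fin n → Fin n → ℝ := fun j => ⇑(b j) with hvdef
  have hlam0 : ∀ j, 0 ≤ lam j := by
    intro j
    have hps : (Zᴴ * Z).PosSemidef := Matrix.posSemidef_conjTranspose_mul_self Z
    rw [Matrix.conjTranspose_eq_transpose_of_trivial] at hps
    exact hps.eigenvalues_nonneg j
  have heig : ∀ j, (Zᵀ * Z) *ᵥ v j = lam j • v j := fun j => hH.mulVec_eigenvectorBasis j
  have hv : ∀ i j, v i ⬝ᵥ v j = if i = j then 1 else 0 := by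
    intro i j
    have horth := b.orthonormal
    rw [orthonormal_iff_ite] at horth
    have h2 := horth i j
    simpa [EuclideanSpace.inner_eq_star_dotProduct, dotProduct, hvdef, mul_comm] using h2
  have hdotZ : ∀ i j, (Z *ᵥ v i) ⬝ᵥ (Z *ᵥ v j) = lam j * (v i ⬝ᵥ v j) := by
    intro i j
    have h1 : v i ⬝ᵥ ((Zᵀ * Z) *ᵥ v j) = (Z *ᵥ v i) ⬝ᵥ (Z *ᵥ v j) := by
      rw [← Matrix.mulVec_mulVec, dotProduct_mulVec, Matrix.vecMul_transpose]
    rw [← h1, heig j, dotProduct_smul, smul_eq_mul]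
  have hZv : ∀ j, (Z *ᵥ v j) ⬝ᵥ (Z *ᵥ v j) = lam j := by
    intro j
    rw [hdotZ j j, hv j j]
    simp
  set s : Fin n → ℝ := fun j => Real.sqrt (lam j) with hsdef
  have hs0 : ∀ j, 0 ≤ s j := fun j => Real.sqrt_nonneg _
  have hssq : ∀ j, s j ^ 2 = lam j := fun j => Real.sq_sqrt (hlam0 j)
  have hsne : ∀ j, s j ≠ 0 ↔ lam j ≠ 0 := by
    intro j
    constructor
    · intro h hlz; exact h (by rw [hsdef]; simp [hlz])
    · intro h hz
      apply h
      have := hssq j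
      rw [hz] at this; simpa using this.symm
  set u : Fin n → Fin m → ℝ := fun j => if lam j = 0 then 0 else (s j)⁻¹ • (Z *ᵥ v j) with hudef
  have hmul : ∀ j, Z *ᵥ v j = s j • u j := by
    intro j
    by_cases hj : lam j = 0
    · have : (Z *ᵥ v j) ⬝ᵥ (Z *ᵥ v j) = 0 := by rw [hZv j, hj]
      rw [dotProduct_self_eq_zero] at this
      rw [this, hudef]
      simp [hj]
    · have hsj : s j ≠ 0 := (hsne j).2 hj
      rw [hudef]
      simp only [hj, if_false]
      rw [smul_inv_smul₀ hsj]
  have huu : ∀ j, s j ≠ 0 → u j ⬝ᵥ u j = 1 := by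
    intro j hsj
    have hj : lam j ≠ 0 := (hsne j).1 hsj
    rw [hudef]
    simp only [hj, if_false]
    rw [smul_dotProduct, dotProduct_smul, hZv j, smul_eq_mul, smul_eq_mul]
    have := hssq j
    field_simp
    nlinarith [this]
  have huo : ∀ i j, i ≠ j → u i ⬝ᵥ u j = 0 := by
    intro i j hij
    by_cases hi : lam i = 0
    · rw [hudef]; simp [hi]
    · by_cases hj : lam j = 0
      · rw [hudef]; simp [hi, hj]
      · rw [hudef]
        simp only [hi, hj, if_false]
        rw [smul_dotProduct, dotProduct_smul, hdotZ i j, hv i j,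
          if_neg hij]
        simp
  have hun : ∀ j, u j ⬝ᵥ u j ≤ 1 := by
    intro j
    by_cases hj : lam j = 0
    · rw [hudef]; simp [hj]
    · rw [huu j ((hsne j).2 hj)]
  have hcomp : ∑ j, Matrix.vecMulVec (v j) (v j) = (1 : Matrix (Fin n) (Fin n) ℝ) := by
    ext a c
    have hsum := b.sum_inner_mul_inner (EuclideanSpace.single a (1:ℝ))
      (EuclideanSpace.single c (1:ℝ))
    have h1 : ∀ j, (inner ℝ (EuclideanSpace.single a (1:ℝ)) (b j) : ℝ) = v j a := by
      intro j; rw [EuclideanSpace.inner_single_left]; simp [hvdef]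
    have h2 : ∀ j, (inner ℝ (b j) (EuclideanSpace.single c (1:ℝ)) : ℝ) = v j c := by
      intro j; rw [EuclideanSpace.inner_single_right]; simp [hvdef]
    have h3 : (inner ℝ (EuclideanSpace.single a (1:ℝ)) (EuclideanSpace.single c (1:ℝ)) : ℝ)
        = if a = c then 1 else 0 := by
      rw [EuclideanSpace.inner_single_left]
      simp [EuclideanSpace.single_apply, eq_comm]
    simp only [h1, h2, h3] at hsum
    simp only [Finset.sum_apply, Matrix.sum_apply, Matrix.vecMulVec_apply, Matrix.one_apply]
    exact hsum
  have hrecon : Z = ∑ j, s j • Matrix.vecMulVec (u j) (v j) := by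
    have h2 : ∀ j, s j • Matrix.vecMulVec (u j) (v j) = Matrix.vecMulVec (Z *ᵥ v j) (v j) := by
      intro j
      rw [hmul j]
      ext i c
      simp [Matrix.vecMulVec_apply, smul_eq_mul]
      ring
    calc Z = Z * 1 := (Matrix.mul_one Z).symm
    _ = Z * ∑ j, Matrix.vecMulVec (v j) (v j) := by rw [hcomp]
    _ = ∑ j, Z * Matrix.vecMulVec (v j) (v j) := by rw [Matrix.mul_sum]
    _ = ∑ j, Matrix.vecMulVec (Z *ᵥ v j) (v j) := by
        refine Finset.sum_congr rfl fun j _ => ?_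
        ext i c
        simp [Matrix.mul_apply, Matrix.vecMulVec_apply, Matrix.mulVec, dotProduct,
          Finset.sum_mul, mul_assoc]
    _ = ∑ j, s j • Matrix.vecMulVec (u j) (v j) := by simp_rw [h2]
  have hcard : (Finset.univ.filter (fun j => s j ≠ 0)).card ≤ min m n := by
    have hfe : (Finset.univ.filter (fun j => s j ≠ 0))
        = (Finset.univ.filter (fun j => lam j ≠ 0)) := by
      apply Finset.filter_congr
      intro j _
      simp [hsne j]
    rw [hfe]
    have h1 : (Finset.univ.filter (fun j => lam j ≠ 0)).card
        = Fintype.card {j // lam j ≠ 0} := (Fintype.card_subtype _).symm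
    rw [h1, ← hH.rank_eq_card_non_zero_eigs,
      Matrix.rank_transpose_mul_self]
    exact le_min (Matrix.rank_le_card_height Z |>.trans (by simp))
      (Matrix.rank_le_card_width Z |>.trans (by simp))
  refine ⟨s, u, v, hs0, rfl, hmul, huo, hun, huu, hv, hrecon, hcard⟩

lemma nuclearNorm_rankOneSum_le {r : ℕ} (d : Fin r → ℝ) (α : Fin r → Fin m → ℝ)
    (β : Fin r → Fin n → ℝ) (hd : ∀ k, 0 ≤ d k) (hα : ∀ k, l2norm (α k) ≤ 1)
    (hβ : ∀ k, l2norm (β k) ≤ 1) :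
    nuclearNorm (rankOneSum d α β) ≤ ∑ k, d k := by
  classical
  set M : Matrix (Fin m) (Fin n) ℝ := rankOneSum d α β with hM
  obtain ⟨s, u, v, hs0, hsum, hmul, huo, hun, huu, hv, -, -⟩ := exists_svd M
  rw [← hsum]
  have hstep : ∀ j, s j = u j ⬝ᵥ (M *ᵥ v j) := by
    intro j
    rw [hmul j, dotProduct_smul]
    by_cases hj : s j = 0
    · simp [hj]
    · rw [huu j hj]; simp
  have hexpand : ∀ j, u j ⬝ᵥ (M *ᵥ v j) = ∑ k, d k * ((v j ⬝ᵥ β k) * (u j ⬝ᵥ α k)) := by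
    intro j
    rw [hM, rankOneSum, sum_mulVec', dotProduct_sum']
    refine Finset.sum_congr rfl fun k _ => ?_
    rw [Matrix.smul_mulVec, vecMulVec_mulVec, dotProduct_smul,
      dotProduct_smul, smul_eq_mul, smul_eq_mul]
    rw [dotProduct_comm (β k) (v j)]
  calc ∑ j, s j = ∑ j, ∑ k, d k * ((v j ⬝ᵥ β k) * (u j ⬝ᵥ α k)) := by
        refine Finset.sum_congr rfl fun j _ => ?_
        rw [hstep j, hexpand j]
  _ = ∑ k, d k * ∑ j, (v j ⬝ᵥ β k) * (u j ⬝ᵥ α k) := by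
        rw [Finset.sum_comm]
        refine Finset.sum_congr rfl fun k _ => ?_
        rw [Finset.mul_sum]
  _ ≤ ∑ k, d k := by
        refine Finset.sum_le_sum fun k _ => ?_
        have hbα : ∑ j, (u j ⬝ᵥ α k) ^ 2 ≤ 1 :=
          le_trans (bessel u huo hun (α k)) (dot_le_one_of_l2norm_le_one (hα k))
        have hbβ : ∑ j, (v j ⬝ᵥ β k) ^ 2 ≤ 1 := by
          refine le_trans (bessel v (fun i j hij => by rw [hv i j, if_neg hij])
            (fun j => by rw [hv j j]; simp) (β k)) (dot_le_one_of_l2norm_le_one (hβ k))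
        have hcs := Finset.sum_mul_sq_le_sq_mul_sq Finset.univ
          (fun j => v j ⬝ᵥ β k) (fun j => u j ⬝ᵥ α k)
        have h1 : ∑ j, (v j ⬝ᵥ β k) * (u j ⬝ᵥ α k) ≤ 1 := by
          have h20 : (0:ℝ) ≤ ∑ j, (u j ⬝ᵥ α k) ^ 2 :=
            Finset.sum_nonneg fun j _ => sq_nonneg _
          have h21 : (0:ℝ) ≤ ∑ j, (v j ⬝ᵥ β k) ^ 2 :=
            Finset.sum_nonneg fun j _ => sq_nonneg _
          nlinarith [hcs]
        calc d k * ∑ j, (v j ⬝ᵥ β k) * (u j ⬝ᵥ α k) ≤ d k * 1 :=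
              mul_le_mul_of_nonneg_left h1 (hd k)
        _ = d k := mul_one _

lemma exists_decomp {r : ℕ} (hr : r = min m n) (Z : Matrix (Fin m) (Fin n) ℝ) :
    ∃ (d : Fin r → ℝ) (α : Fin r → Fin m → ℝ) (β : Fin r → Fin n → ℝ),
      (∀ k, 0 ≤ d k) ∧ (∀ k, l2norm (α k) ≤ 1) ∧ (∀ k, l2norm (β k) ≤ 1) ∧
      rankOneSum d α β = Z ∧ ∑ k, d k ≤ nuclearNorm Z := by
  classical
  obtain ⟨s, u, v, hs0, hsum, hmul, huo, hun, huu, hv, hrecon, hcard⟩ := exists_svd Z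
  set S : Finset (Fin n) := Finset.univ.filter (fun j => s j ≠ 0) with hS
  have hcardS : Fintype.card ↥S ≤ Fintype.card (Fin r) := by
    rw [Fintype.card_coe, Fintype.card_fin, hr]
    exact hcard
  obtain ⟨e⟩ : Nonempty (↥S ↪ Fin r) := Function.Embedding.nonempty_of_card_le hcardS
  set d : Fin r → ℝ := Function.extend ⇑e (fun j => s ↑j) (fun _ => 0) with hd
  set A : Fin r → Fin m → ℝ := Function.extend ⇑e (fun j => u ↑j) (fun _ => 0) with hA
  set B : Fin r → Fin n → ℝ := Function.extend ⇑e (fun j => v ↑j) (fun _ => 0) with hB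
  have hcases : ∀ k : Fin r, (d k = 0 ∧ A k = 0 ∧ B k = 0) ∨
      ∃ j : ↥S, e j = k ∧ d k = s ↑j ∧ A k = u ↑j ∧ B k = v ↑j := by
    intro k
    by_cases h : ∃ j : ↥S, e j = k
    · obtain ⟨j, hj⟩ := h
      right
      exact ⟨j, hj, by rw [← hj, hd, e.injective.extend_apply],
        by rw [← hj, hA, e.injective.extend_apply],
        by rw [← hj, hB, e.injective.extend_apply]⟩
    · left
      exact ⟨Function.extend_apply' _ _ _ h, Function.extend_apply' _ _ _ h,
        Function.extend_apply' _ _ _ h⟩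
  have hl2zero : l2norm (0 : Fin m → ℝ) ≤ 1 := by
    rw [l2norm]; simp
  have hl2zero' : l2norm (0 : Fin n → ℝ) ≤ 1 := by
    rw [l2norm]; simp
  refine ⟨d, A, B, ?_, ?_, ?_, ?_, ?_⟩
  · intro k
    rcases hcases k with ⟨h0, -, -⟩ | ⟨j, -, h0, -, -⟩
    · rw [h0]
    · rw [h0]; exact hs0 j
  · intro k
    rcases hcases k with ⟨-, h0, -⟩ | ⟨j, -, -, h0, -⟩
    · rw [h0]; exact hl2zero
    · rw [h0]; exact l2norm_le_one_of_dot (hun j)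
  · intro k
    rcases hcases k with ⟨-, -, h0⟩ | ⟨j, -, -, -, h0⟩
    · rw [h0]; exact hl2zero'
    · rw [h0]
      apply l2norm_le_one_of_dot
      rw [hv ↑j ↑j]
      simp
  · rw [rankOneSum]
    have hz : ∀ k ∈ Finset.univ, k ∉ Finset.univ.image ⇑e →
        d k • Matrix.vecMulVec (A k) (B k) = 0 := by
      intro k _ hk
      have h : ¬∃ j : ↥S, e j = k := by
        intro ⟨j, hj⟩
        exact hk (Finset.mem_image.mpr ⟨j, Finset.mem_univ j, hj⟩)
      rw [hd, Function.extend_apply' _ _ _ h, zero_smul]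
    rw [← Finset.sum_subset (Finset.subset_univ (Finset.univ.image ⇑e)) hz]
    rw [Finset.sum_image (fun a _ b _ h => e.injective h)]
    have hterm : ∀ j : ↥S, d (e j) • Matrix.vecMulVec (A (e j)) (B (e j))
        = s ↑j • Matrix.vecMulVec (u ↑j) (v ↑j) := by
      intro j
      rw [hd, hA, hB, e.injective.extend_apply, e.injective.extend_apply,
        e.injective.extend_apply]
    rw [Finset.sum_congr rfl (fun j _ => hterm j)]
    rw [Finset.univ_eq_attach, Finset.sum_attach S (fun j => s j • Matrix.vecMulVec (u j) (v j))]
    rw [hrecon]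
    apply Finset.sum_subset (Finset.subset_univ S)
    intro j _ hj
    have : s j = 0 := by
      by_contra hne
      exact hj (by rw [hS]; simp [hne])
    rw [this, zero_smul]
  · have h1 : ∑ k, d k = ∑ j ∈ S, s j := by
      have hz : ∀ k ∈ Finset.univ, k ∉ Finset.univ.image ⇑e → d k = 0 := by
        intro k _ hk
        have h : ¬∃ j : ↥S, e j = k := by
          intro ⟨j, hj⟩
          exact hk (Finset.mem_image.mpr ⟨j, Finset.mem_univ j, hj⟩)
        rw [hd, Function.extend_apply' _ _ _ h]
      rw [← Finset.sum_subset (Finset.subset_univ (Finset.univ.image ⇑e)) hz]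
      rw [Finset.sum_image (fun a _ b _ h => e.injective h)]
      have hterm : ∀ j : ↥S, d (e j) = s ↑j := fun j => by
        rw [hd, e.injective.extend_apply]
      rw [Finset.sum_congr rfl (fun j _ => hterm j)]
      rw [Finset.univ_eq_attach, Finset.sum_attach S (fun j => s j)]
    rw [h1, ← hsum]
    exact Finset.sum_le_sum_of_subset_of_nonneg (Finset.subset_univ S)
      (fun j _ _ => hs0 j)

end P2P1aux

theorem optimal_solution_transfer_P2_to_P1
    (m n : ℕ) (hm : 0 < m) (hn : 0 < n) (r : ℕ) (hr : r = min m n)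
    (Ω : Finset (Fin m × Fin n)) (X : Matrix (Fin m) (Fin n) ℝ)
    (σ lam : ℝ) (hσ : 0 < σ) (hlam : 0 < lam)
    (F : Matrix (Fin m) (Fin n) ℝ → ℝ)
    (hF : ∀ Z, F Z = (1 / (2 * σ ^ 2)) * ∑ p ∈ Ω, (X p.1 p.2 - Z p.1 p.2) ^ 2
        + lam * nuclearNorm Z)
    (G : (Fin r → ℝ) → (Fin r → Fin m → ℝ) → (Fin r → Fin n → ℝ) → ℝ)
    (hG : ∀ d α β, G d α β =
        (1 / (2 * σ ^ 2)) * ∑ p ∈ Ω, (X p.1 p.2 - rankOneSum d α β p.1 p.2) ^ 2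
        + lam * ∑ k, d k)
    (dstar : Fin r → ℝ) (αstar : Fin r → Fin m → ℝ) (βstar : Fin r → Fin n → ℝ)
    (hd : ∀ k, 0 ≤ dstar k) (hα : ∀ k, l2norm (αstar k) ≤ 1)
    (hβ : ∀ k, l2norm (βstar k) ≤ 1)
    (hmin : ∀ (d : Fin r → ℝ) (α : Fin r → Fin m → ℝ) (β : Fin r → Fin n → ℝ),
        (∀ k, 0 ≤ d k) → (∀ k, l2norm (α k) ≤ 1) → (∀ k, l2norm (β k) ≤ 1) →
        G dstar αstar βstar ≤ G d α β) :
    ∀ Z : Matrix (Fin m) (Fin n) ℝ, F (rankOneSum dstar αstar βstar) ≤ F Z := by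
  intro Z
  obtain ⟨d, α, β, hd1, hα1, hβ1, hZeq, hdle⟩ := P2P1aux.exists_decomp hr Z
  have h1 : F (rankOneSum dstar αstar βstar) ≤ G dstar αstar βstar := by
    rw [hF, hG]
    have hb := P2P1aux.nuclearNorm_rankOneSum_le dstar αstar βstar hd hα hβ
    have := mul_le_mul_of_nonneg_left hb hlam.le
    linarith
  have h2 : G dstar αstar βstar ≤ G d α β := hmin d α β hd1 hα1 hβ1
  have h3 : G d α β ≤ F Z := by
    rw [hF, hG, hZeq]
    have := mul_le_mul_of_nonneg_left hdle hlam.le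
    linarith
  linarith
end
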